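/- Let W be the irreducible finite reflection group of type D_n with n = 2ℓ even (ℓ ≥ 2), acting on ℝ^n by permutations and even sign changes of coordinates, so that Δ = ∏_{1 ≤ i < j ≤ n} (x_i² − x_j²). Then for f = x_1 x_2 ⋯ x_n, the 1-form df is an eigenvector of φ̃ : Ω_W → Ω_W, i.e., there exists λ ∈ ℝ with φ(∂_j f) = λ ∂_j f for every j = 1,…,n. -/

import Mathlib

open MvPolynomial
open scoped Classical

noncomputable section

/-- `S n` is the polynomial ring `ℝ[x₁,…,xₙ]`. -/
abbrev S (n : ℕ) := MvPolynomial (Fin n) ℝ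

/-- `apDiff f g = f(∂)g`: the constant coefficient differential operator `f(∂₁,…,∂ₙ)`
applied to `g`. -/
noncomputable def apDiff {n : ℕ} (f g : S n) : S n :=
  ∑ a ∈ f.support, ∑ b ∈ g.support,
    if a ≤ b then
      (MvPolynomial.coeff a f * MvPolynomial.coeff b g *
        ∏ i, ((b i).descFactorial (a i) : ℝ)) • MvPolynomial.monomial (b - a) (1 : ℝ)
    else 0

/-- The inner product `⟨f,g⟩ = f(∂)g(x)|_{x=0}`. -/
noncomputable def ip {n : ℕ} (f g : S n) : ℝ :=
  MvPolynomial.eval (fun _ => (0 : ℝ)) (apDiff f g)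

variable {n : ℕ}

namespace AD

variable {n : ℕ}

/-- The combinatorial factor. -/
def K (a b : Fin n →₀ ℕ) : ℝ := ∏ i, ((b i).descFactorial (a i) : ℝ)

/-- One term of `apDiff`. -/
def term (ca cb : ℝ) (a b : Fin n →₀ ℕ) : S n :=
  if a ≤ b then (ca * cb * K a b) • MvPolynomial.monomial (b - a) (1 : ℝ) else 0

lemma term_zero_left (cb : ℝ) (a b : Fin n →₀ ℕ) : term 0 cb a b = 0 := by
  simp [term]

lemma term_zero_right (ca : ℝ) (a b : Fin n →₀ ℕ) : term ca 0 a b = 0 := by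
  simp [term]

lemma apDiff_eq_sum {f g : S n} {A B : Finset (Fin n →₀ ℕ)}
    (hA : f.support ⊆ A) (hB : g.support ⊆ B) :
    apDiff f g = ∑ a ∈ A, ∑ b ∈ B, term (coeff a f) (coeff b g) a b := by
  rw [apDiff]
  rw [Finset.sum_subset hA]
  · apply Finset.sum_congr rfl
    intro a _
    rw [Finset.sum_subset hB]
    · apply Finset.sum_congr rfl
      intro b _
      rfl
    · intro b _ hb
      rw [MvPolynomial.notMem_support_iff.mp hb]
      simp
  · intro a _ ha
    rw [MvPolynomial.notMem_support_iff.mp ha]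
    simp [term_zero_left]

lemma apDiff_monomial (a b : Fin n →₀ ℕ) (c d : ℝ) :
    apDiff (monomial a c) (monomial b d) = term c d a b := by
  rw [apDiff_eq_sum (A := {a}) (B := {b}) support_monomial_subset support_monomial_subset]
  simp [coeff_monomial]

@[simp] lemma apDiff_zero_left (g : S n) : apDiff 0 g = 0 := by
  rw [apDiff_eq_sum (A := ∅) (B := g.support)] <;> simp

@[simp] lemma apDiff_zero_right (f : S n) : apDiff f 0 = 0 := by
  rw [apDiff_eq_sum (A := f.support) (B := ∅)] <;> simp

lemma apDiff_add_left (f f' g : S n) :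
    apDiff (f + f') g = apDiff f g + apDiff f' g := by
  rw [apDiff_eq_sum (A := f.support ∪ f'.support) (B := g.support)
      (le_trans (MvPolynomial.support_add) (le_refl _)) (le_refl _),
    apDiff_eq_sum (A := f.support ∪ f'.support) (B := g.support)
      Finset.subset_union_left (le_refl _),
    apDiff_eq_sum (A := f.support ∪ f'.support) (B := g.support)
      Finset.subset_union_right (le_refl _), ← Finset.sum_add_distrib]
  apply Finset.sum_congr rfl
  intro a _
  rw [← Finset.sum_add_distrib]
  apply Finset.sum_congr rfl
  intro b _
  simp only [term, coeff_add]
  split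
  · rw [← add_smul]; ring_nf
  · simp

lemma apDiff_add_right (f g g' : S n) :
    apDiff f (g + g') = apDiff f g + apDiff f g' := by
  rw [apDiff_eq_sum (A := f.support) (B := g.support ∪ g'.support)
      (le_refl _) (le_trans (MvPolynomial.support_add) (le_refl _)),
    apDiff_eq_sum (A := f.support) (B := g.support ∪ g'.support)
      (le_refl _) Finset.subset_union_left,
    apDiff_eq_sum (A := f.support) (B := g.support ∪ g'.support)
      (le_refl _) Finset.subset_union_right, ← Finset.sum_add_distrib]
  apply Finset.sum_congr rfl
  intro a _
  rw [← Finset.sum_add_distrib]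
  apply Finset.sum_congr rfl
  intro b _
  simp only [term, coeff_add]
  split
  · rw [← add_smul]; ring_nf
  · simp

lemma apDiff_smul_left (c : ℝ) (f g : S n) :
    apDiff (c • f) g = c • apDiff f g := by
  rw [apDiff_eq_sum (A := f.support) (B := g.support)
      (MvPolynomial.support_smul) (le_refl _),
    apDiff_eq_sum (A := f.support) (B := g.support) (le_refl _) (le_refl _),
    Finset.smul_sum]
  apply Finset.sum_congr rfl
  intro a _
  rw [Finset.smul_sum]
  apply Finset.sum_congr rfl
  intro b _
  simp only [term, MvPolynomial.coeff_smul, smul_eq_mul]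
  split
  · rw [smul_smul]; ring_nf
  · simp

lemma apDiff_smul_right (c : ℝ) (f g : S n) :
    apDiff f (c • g) = c • apDiff f g := by
  rw [apDiff_eq_sum (A := f.support) (B := g.support)
      (le_refl _) (MvPolynomial.support_smul),
    apDiff_eq_sum (A := f.support) (B := g.support) (le_refl _) (le_refl _),
    Finset.smul_sum]
  apply Finset.sum_congr rfl
  intro a _
  rw [Finset.smul_sum]
  apply Finset.sum_congr rfl
  intro b _
  simp only [term, MvPolynomial.coeff_smul, smul_eq_mul]
  split
  · rw [smul_smul]; ring_nf
  · simp

lemma apDiff_sum_left {ι : Type*} (s : Finset ι) (f : ι → S n) (g : S n) :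
    apDiff (∑ i ∈ s, f i) g = ∑ i ∈ s, apDiff (f i) g := by
  induction s using Finset.cons_induction with
  | empty => simp
  | cons i s hi ih => rw [Finset.sum_cons, apDiff_add_left, ih, Finset.sum_cons]

lemma apDiff_sum_right {ι : Type*} (s : Finset ι) (f : S n) (g : ι → S n) :
    apDiff f (∑ i ∈ s, g i) = ∑ i ∈ s, apDiff f (g i) := by
  induction s using Finset.cons_induction with
  | empty => simp
  | cons i s hi ih => rw [Finset.sum_cons, apDiff_add_right, ih, Finset.sum_cons]

end AD

namespace AD

variable {n : ℕ}

lemma prod_smul'' {ι : Type*} (s : Finset ι) (c : ι → ℝ) (f : ι → S n) :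
    ∏ i ∈ s, (c i • f i) = (∏ i ∈ s, c i) • ∏ i ∈ s, f i := by
  induction s using Finset.cons_induction with
  | empty => simp
  | cons i s hi ih =>
      rw [Finset.prod_cons, Finset.prod_cons, Finset.prod_cons, ih, smul_mul_smul_comm]

lemma apDiff_expand (f g : S n) :
    apDiff f g = ∑ a ∈ f.support, ∑ b ∈ g.support,
      apDiff (monomial a (coeff a f)) (monomial b (coeff b g)) := by
  rw [apDiff_eq_sum (le_refl _) (le_refl _)]
  exact Finset.sum_congr rfl fun a _ => Finset.sum_congr rfl fun b _ =>
    (apDiff_monomial a b _ _).symm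

/-! ### Sign-change maps -/

/-- The sign-change algebra endomorphism determined by `s : Fin n → ℝ`. -/
def epsHom (s : Fin n → ℝ) : S n →ₐ[ℝ] S n :=
  MvPolynomial.aeval (fun k => s k • MvPolynomial.X k)

/-- The eigenvalue of `epsHom s` on the monomial with exponent vector `b`. -/
def eV (s : Fin n → ℝ) (b : Fin n →₀ ℕ) : ℝ := ∏ i, s i ^ b i

lemma eps_monomial (s : Fin n → ℝ) (b : Fin n →₀ ℕ) (c : ℝ) :
    epsHom s (monomial b c) = eV s b • monomial b c := by
  rw [monomial_eq, map_mul]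
  have h1 : epsHom s (C c : S n) = C c := by
    simp [epsHom, algHom_C]
  rw [h1]
  rw [Finsupp.prod, map_prod]
  have h2 : ∀ i ∈ b.support, epsHom s ((X i : S n) ^ b i) = (s i ^ b i) • (X i : S n) ^ b i := by
    intro i _
    rw [map_pow]
    have : epsHom s (X i : S n) = s i • X i := by simp [epsHom]
    rw [this, smul_pow]
  rw [Finset.prod_congr rfl h2, prod_smul'']
  have h3 : (∏ i ∈ b.support, s i ^ b i) = eV s b := by
    rw [eV]
    apply Finset.prod_subset (Finset.subset_univ _)
    intro i _ hi
    rw [Finsupp.notMem_support_iff.mp hi, pow_zero]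
  rw [h3, mul_smul_comm]

lemma eV_sub (s : Fin n → ℝ) (hs : ∀ i, s i * s i = 1) {a b : Fin n →₀ ℕ} (h : a ≤ b) :
    eV s a * eV s b = eV s (b - a) := by
  rw [eV, eV, eV, ← Finset.prod_mul_distrib]
  apply Finset.prod_congr rfl
  intro i _
  have hab : a i ≤ b i := h i
  have hsq : s i ^ 2 = 1 := by rw [pow_two]; exact hs i
  calc s i ^ a i * s i ^ b i = s i ^ (a i + b i) := by rw [pow_add]
    _ = s i ^ ((b - a) i + 2 * a i) := by
        rw [Finsupp.tsub_apply]
        congr 1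
        omega
    _ = s i ^ ((b - a) i) * (s i ^ 2) ^ a i := by rw [pow_add, pow_mul]
    _ = s i ^ ((b - a) i) := by rw [hsq, one_pow, mul_one]

lemma eps_term (s : Fin n → ℝ) (hs : ∀ i, s i * s i = 1) (c d : ℝ) (a b : Fin n →₀ ℕ) :
    epsHom s (term c d a b) = (eV s a * eV s b) • term c d a b := by
  rw [term]
  split
  · rename_i h
    rw [map_smul, eps_monomial, smul_smul, smul_smul, eV_sub s hs h]
    ring_nf
  · simp

lemma eps_apDiff (s : Fin n → ℝ) (hs : ∀ i, s i * s i = 1) (f g : S n) :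
    apDiff (epsHom s f) (epsHom s g) = epsHom s (apDiff f g) := by
  conv_lhs => rw [← support_sum_monomial_coeff f, ← support_sum_monomial_coeff g]
  conv_rhs => rw [apDiff_expand f g]
  simp only [map_sum]
  rw [apDiff_sum_left]
  apply Finset.sum_congr rfl
  intro a _
  rw [apDiff_sum_right]
  apply Finset.sum_congr rfl
  intro b _
  rw [eps_monomial, eps_monomial, apDiff_smul_left, apDiff_smul_right,
    apDiff_monomial, eps_term s hs, smul_smul]

end AD

namespace AD

variable {n : ℕ}

/-! ### Rename (permutation) commutation -/

lemma mapDomain_apply' (σ : Equiv.Perm (Fin n)) (a : Fin n →₀ ℕ) (x : Fin n) :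
    Finsupp.mapDomain σ a x = a (σ.symm x) := by
  rw [← Finsupp.equivMapDomain_eq_mapDomain, Finsupp.equivMapDomain_apply]

lemma mapDomain_le_iff (σ : Equiv.Perm (Fin n)) (a b : Fin n →₀ ℕ) :
    Finsupp.mapDomain σ a ≤ Finsupp.mapDomain σ b ↔ a ≤ b := by
  rw [Finsupp.le_def, Finsupp.le_def]
  constructor
  · intro h y
    have := h (σ y)
    rwa [mapDomain_apply', mapDomain_apply', Equiv.symm_apply_apply] at this
  · intro h x
    rw [mapDomain_apply', mapDomain_apply']
    exact h _

lemma K_mapDomain (σ : Equiv.Perm (Fin n)) (a b : Fin n →₀ ℕ) :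
    K (Finsupp.mapDomain σ a) (Finsupp.mapDomain σ b) = K a b := by
  rw [K, K]
  rw [show (fun i => ((Finsupp.mapDomain σ b i).descFactorial (Finsupp.mapDomain σ a i) : ℝ))
      = fun i => ((b (σ.symm i)).descFactorial (a (σ.symm i)) : ℝ) by
    funext i; rw [mapDomain_apply', mapDomain_apply']]
  exact Equiv.prod_comp σ.symm (fun i => ((b i).descFactorial (a i) : ℝ))

lemma mapDomain_tsub (σ : Equiv.Perm (Fin n)) (a b : Fin n →₀ ℕ) :
    Finsupp.mapDomain σ (b - a) = Finsupp.mapDomain σ b - Finsupp.mapDomain σ a := by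
  ext x
  rw [Finsupp.tsub_apply, mapDomain_apply', mapDomain_apply', mapDomain_apply',
    Finsupp.tsub_apply]

lemma rename_term (σ : Equiv.Perm (Fin n)) (c d : ℝ) (a b : Fin n →₀ ℕ) :
    rename σ (term c d a b) = term c d (Finsupp.mapDomain σ a) (Finsupp.mapDomain σ b) := by
  rw [term, term, K_mapDomain]
  by_cases h : a ≤ b
  · rw [if_pos h, if_pos ((mapDomain_le_iff σ a b).mpr h), map_smul, rename_monomial,
      mapDomain_tsub]
  · rw [if_neg h, if_neg (fun hc => h ((mapDomain_le_iff σ a b).mp hc)), map_zero]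

lemma rename_apDiff (σ : Equiv.Perm (Fin n)) (f g : S n) :
    rename σ (apDiff f g) = apDiff (rename σ f) (rename σ g) := by
  conv_rhs => rw [← support_sum_monomial_coeff f, ← support_sum_monomial_coeff g]
  conv_lhs => rw [apDiff_expand f g]
  simp only [map_sum]
  rw [apDiff_sum_left]
  apply Finset.sum_congr rfl
  intro a _
  rw [apDiff_sum_right]
  apply Finset.sum_congr rfl
  intro b _
  rw [rename_monomial, rename_monomial, apDiff_monomial, apDiff_monomial, rename_term]

end AD

namespace AD

variable {n : ℕ}

/-! ### Homogeneity -/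

lemma degF (d : Fin n →₀ ℕ) : Finsupp.degree d = ∑ i, d i := by
  rw [Finsupp.degree]
  apply Finset.sum_subset (Finset.subset_univ _)
  intro i _ hi
  exact Finsupp.notMem_support_iff.mp hi

lemma coeff_apDiff_ne_zero {f g : S n} {m : Fin n →₀ ℕ}
    (h : coeff m (apDiff f g) ≠ 0) :
    ∃ a ∈ f.support, ∃ b ∈ g.support, a ≤ b ∧ b - a = m := by
  rw [apDiff_eq_sum (le_refl f.support) (le_refl g.support)] at h
  rw [coeff_sum] at h
  obtain ⟨a, ha, h⟩ := Finset.exists_ne_zero_of_sum_ne_zero h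
  rw [coeff_sum] at h
  obtain ⟨b, hb, h⟩ := Finset.exists_ne_zero_of_sum_ne_zero h
  refine ⟨a, ha, b, hb, ?_⟩
  rw [term] at h
  split at h
  · rename_i hle
    refine ⟨hle, ?_⟩
    rw [MvPolynomial.coeff_smul, MvPolynomial.coeff_monomial] at h
    by_contra hne
    rw [if_neg hne] at h
    simp at h
  · simp at h

lemma apDiff_isHomogeneous {f g : S n} {d e : ℕ}
    (hf : f.IsHomogeneous d) (hg : g.IsHomogeneous e) :
    (apDiff f g).IsHomogeneous (e - d) := by
  intro m hm
  obtain ⟨a, ha, b, hb, hle, hba⟩ := coeff_apDiff_ne_zero hm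
  have hfa : Finsupp.weight 1 a = d := hf (MvPolynomial.mem_support_iff.mp ha)
  have hgb : Finsupp.weight 1 b = e := hg (MvPolynomial.mem_support_iff.mp hb)
  rw [Pi.one_def, ← Finsupp.degree_eq_weight_one] at hfa hgb ⊢
  rw [← hba, degF] at *
  have hsum : ∑ i, (b - a) i = (∑ i, b i) - ∑ i, a i := by
    have : ∀ i ∈ Finset.univ, (b - a) i + a i = b i := by
      intro i _
      rw [Finsupp.tsub_apply]
      have := Finsupp.le_def.mp hle i
      omega
    have hb' : ∑ i, b i = (∑ i, (b - a) i) + ∑ i, a i := by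
      rw [← Finset.sum_add_distrib]
      exact (Finset.sum_congr rfl this).symm
    omega
  rw [hsum, hfa, hgb]

end AD

namespace AD

variable (n : ℕ)

/-! ### The concrete polynomials -/

/-- All-ones exponent vector. -/
def U : Fin n →₀ ℕ := Finsupp.equivFunOnFinite.symm (fun _ => 1)

@[simp] lemma U_apply (x : Fin n) : U n x = 1 := rfl

/-- The exponent vector of `∂ⱼ(x₁⋯xₙ)`. -/
def A (j : Fin n) : Fin n →₀ ℕ := U n - Finsupp.single j 1

lemma A_apply (j x : Fin n) : A n j x = if x = j then 0 else 1 := by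
  rw [A, Finsupp.tsub_apply, U_apply, Finsupp.single_apply]
  by_cases h : x = j
  · simp [h]
  · simp [h, Ne.symm h]

lemma prod_monomial {ι : Type*} (s : Finset ι) (d : ι → (Fin n →₀ ℕ)) :
    (∏ i ∈ s, (monomial (d i) (1 : ℝ) : S n)) = monomial (∑ i ∈ s, d i) 1 := by
  induction s using Finset.cons_induction with
  | empty => simp [monomial_zero']
  | cons i s hi ih =>
      rw [Finset.prod_cons, Finset.sum_cons, ih, monomial_mul, one_mul]

lemma prod_X_eq : (∏ i, (X i : S n)) = monomial (U n) 1 := by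
  have h1 : ∀ i : Fin n, (X i : S n) = monomial (Finsupp.single i 1) 1 := fun i => rfl
  rw [Finset.prod_congr rfl (fun i _ => h1 i), prod_monomial]
  have h2 : (∑ i : Fin n, Finsupp.single i (1 : ℕ)) = U n := by
    ext x
    rw [Finsupp.finset_sum_apply]
    rw [Finset.sum_eq_single_of_mem x (Finset.mem_univ x)]
    · simp
    · intro i _ hix
      exact Finsupp.single_eq_of_ne' hix
  rw [h2]

lemma pderiv_prod_X (j : Fin n) :
    MvPolynomial.pderiv j (∏ i, (X i : S n)) = monomial (A n j) 1 := by
  rw [prod_X_eq, pderiv_monomial, A]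
  simp

/-- The fundamental antiinvariant. -/
def Dpoly : S n :=
  ∏ i : Fin n, ∏ k ∈ Finset.Ioi i, ((X i : S n) ^ 2 - X k ^ 2)

/-- its degree -/
def ND : ℕ := ∑ i : Fin n, ∑ _k ∈ Finset.Ioi i, 2

lemma Dpoly_isHomogeneous : (Dpoly n).IsHomogeneous (ND n) := by
  apply MvPolynomial.IsHomogeneous.prod
  intro i _
  apply MvPolynomial.IsHomogeneous.prod
  intro k _
  have h1 : ((X i : S n) ^ 2).IsHomogeneous 2 := by
    simpa using (MvPolynomial.isHomogeneous_X ℝ i).pow 2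
  have h2 : ((X k : S n) ^ 2).IsHomogeneous 2 := by
    simpa using (MvPolynomial.isHomogeneous_X ℝ k).pow 2
  exact h1.sub h2

lemma ND_ge (hn : 2 ≤ n) : n - 1 ≤ ND n := by
  rw [ND]
  calc n - 1 ≤ ∑ _k ∈ Finset.Ioi (⟨0, by omega⟩ : Fin n), 2 := by
        rw [Finset.sum_const, smul_eq_mul, Fin.card_Ioi]
        have h : (⟨0, by omega⟩ : Fin n).val = 0 := rfl
        omega
    _ ≤ ∑ i : Fin n, ∑ _k ∈ Finset.Ioi i, 2 :=
        Finset.single_le_sum (f := fun i : Fin n => ∑ _k ∈ Finset.Ioi i, 2)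
          (fun i _ => Nat.zero_le _) (Finset.mem_univ _)

lemma A_degree (hn : 2 ≤ n) (j : Fin n) : ∑ x, A n j x = n - 1 := by
  rw [← Finset.add_sum_erase _ _ (Finset.mem_univ j)]
  rw [A_apply, if_pos rfl, zero_add]
  rw [Finset.sum_congr rfl (fun x hx => by
    rw [A_apply, if_neg (Finset.ne_of_mem_erase hx)])]
  rw [Finset.sum_const, smul_eq_mul, mul_one, Finset.card_erase_of_mem (Finset.mem_univ j),
    Finset.card_univ, Fintype.card_fin]

lemma monA_isHomogeneous (hn : 2 ≤ n) (j : Fin n) :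
    (monomial (A n j) (1 : ℝ) : S n).IsHomogeneous (n - 1) := by
  apply MvPolynomial.isHomogeneous_monomial
  rw [degF, A_degree n hn j]

end AD

namespace AD

variable (n : ℕ)

/-! ### Parity analysis -/

/-- Sign vector changing the sign of the `i₀`-th coordinate. -/
def sgn (i₀ : Fin n) : Fin n → ℝ := fun k => if k = i₀ then -1 else 1

lemma sgn_sq (i₀ i : Fin n) : sgn n i₀ i * sgn n i₀ i = 1 := by
  rw [sgn]; split <;> norm_num

lemma eps_Dpoly (i₀ : Fin n) : epsHom (sgn n i₀) (Dpoly n) = Dpoly n := by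
  rw [Dpoly, map_prod]
  apply Finset.prod_congr rfl
  intro i _
  rw [map_prod]
  apply Finset.prod_congr rfl
  intro k _
  have hx : ∀ m : Fin n, epsHom (sgn n i₀) ((X m : S n) ^ 2) = (X m : S n) ^ 2 := by
    intro m
    rw [map_pow]
    have h1 : epsHom (sgn n i₀) (X m : S n) = sgn n i₀ m • X m := by
      simp [epsHom]
    rw [h1, smul_pow]
    have h2 : sgn n i₀ m ^ 2 = 1 := by rw [sq]; exact sgn_sq n i₀ m
    rw [h2, one_smul]
  rw [map_sub, hx, hx]

lemma eV_sgn (i₀ : Fin n) (b : Fin n →₀ ℕ) : eV (sgn n i₀) b = (-1 : ℝ) ^ (b i₀) := by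
  rw [eV]
  rw [Finset.prod_eq_single_of_mem i₀ (Finset.mem_univ i₀)]
  · rw [sgn, if_pos rfl]
  · intro i _ hi
    rw [sgn, if_neg hi, one_pow]

lemma coeff_eps (s : Fin n → ℝ) (p : S n) (b : Fin n →₀ ℕ) :
    coeff b (epsHom s p) = eV s b * coeff b p := by
  conv_lhs => rw [p.as_sum]
  rw [map_sum, coeff_sum]
  rw [Finset.sum_congr rfl (fun a (_ : a ∈ p.support) => by
    rw [eps_monomial, MvPolynomial.coeff_smul, MvPolynomial.coeff_monomial])]
  by_cases hb : b ∈ p.support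
  · rw [Finset.sum_eq_single_of_mem b hb]
    · rw [if_pos rfl, smul_eq_mul]
    · intro a _ hab
      rw [if_neg hab, smul_zero]
  · rw [Finset.sum_eq_zero, MvPolynomial.notMem_support_iff.mp hb, mul_zero]
    intro a ha
    have hab : a ≠ b := fun h => hb (h ▸ ha)
    rw [if_neg hab, smul_zero]

lemma neg_one_pow_mod {p q : ℕ} (h : ((-1 : ℝ)) ^ p = (-1) ^ q) : p % 2 = q % 2 := by
  rcases Nat.even_or_odd p with hp | hp <;> rcases Nat.even_or_odd q with hq | hq
  · rw [Nat.even_iff] at hp hq; omega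
  · rw [hp.neg_one_pow, hq.neg_one_pow] at h; norm_num at h
  · rw [hp.neg_one_pow, hq.neg_one_pow] at h; norm_num at h
  · rw [Nat.odd_iff] at hp hq; omega

/-! ### The main polynomial -/

/-- `φ(∂ⱼ(x₁⋯xₙ))`. -/
def hpol (j : Fin n) : S n :=
  apDiff (apDiff (monomial (A n j) 1) (Dpoly n)) (Dpoly n)

lemma eps_hpol (i₀ j : Fin n) :
    epsHom (sgn n i₀) (hpol n j) = ((-1 : ℝ) ^ (A n j i₀)) • hpol n j := by
  rw [hpol, ← eps_apDiff _ (sgn_sq n i₀), ← eps_apDiff _ (sgn_sq n i₀), eps_Dpoly,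
    eps_monomial, eV_sgn, apDiff_smul_left, apDiff_smul_left]

lemma hpol_isHomogeneous (hn : 2 ≤ n) (j : Fin n) :
    (hpol n j).IsHomogeneous (n - 1) := by
  have h1 := apDiff_isHomogeneous (monA_isHomogeneous n hn j) (Dpoly_isHomogeneous n)
  have h2 := apDiff_isHomogeneous h1 (Dpoly_isHomogeneous n)
  have h3 : ND n - (ND n - (n - 1)) = n - 1 := by
    have := ND_ge n hn
    omega
  rw [hpol]
  rw [← h3]
  exact h2

lemma hpol_coeff_eq_zero (hn : 2 ≤ n) (j : Fin n) {b : Fin n →₀ ℕ}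
    (hb : coeff b (hpol n j) ≠ 0) : b = A n j := by
  -- parity of each coordinate
  have hpar : ∀ i : Fin n, b i % 2 = A n j i % 2 := by
    intro i
    have h1 := congrArg (coeff b) (eps_hpol n i j)
    rw [coeff_eps, eV_sgn, MvPolynomial.coeff_smul, smul_eq_mul] at h1
    exact neg_one_pow_mod (mul_right_cancel₀ hb h1)
  -- total degree
  have hdeg : ∑ x, b x = n - 1 := by
    have h2 := hpol_isHomogeneous n hn j hb
    rw [Pi.one_def, ← Finsupp.degree_eq_weight_one, degF] at h2
    exact h2
  -- each coordinate distinct from j is at least 1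
  have h1 : ∀ i : Fin n, i ≠ j → 1 ≤ b i := by
    intro i hij
    have := hpar i
    rw [A_apply, if_neg hij] at this
    omega
  have hcard : (Finset.univ.erase j).card = n - 1 := by
    rw [Finset.card_erase_of_mem (Finset.mem_univ j), Finset.card_univ, Fintype.card_fin]
  have hsplit : b j + ∑ x ∈ Finset.univ.erase j, b x = n - 1 := by
    rw [Finset.add_sum_erase _ _ (Finset.mem_univ j)]
    exact hdeg
  have hge : n - 1 ≤ ∑ x ∈ Finset.univ.erase j, b x := by
    calc n - 1 = ∑ _x ∈ Finset.univ.erase j, 1 := by rw [Finset.sum_const, smul_eq_mul, hcard, mul_one]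
      _ ≤ ∑ x ∈ Finset.univ.erase j, b x :=
          Finset.sum_le_sum (fun i hi => h1 i (Finset.ne_of_mem_erase hi))
  have hbj : b j = 0 := by omega
  have hone : ∀ i : Fin n, i ≠ j → b i = 1 := by
    intro i hij
    by_contra hne
    have h2 : 2 ≤ b i := by have := h1 i hij; omega
    have hlt : ∑ _x ∈ Finset.univ.erase j, 1 < ∑ x ∈ Finset.univ.erase j, b x := by
      apply Finset.sum_lt_sum (fun k hk => h1 k (Finset.ne_of_mem_erase hk))
      exact ⟨i, Finset.mem_erase.mpr ⟨hij, Finset.mem_univ i⟩, by omega⟩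
    rw [Finset.sum_const, smul_eq_mul, hcard, mul_one] at hlt
    omega
  ext x
  rw [A_apply]
  by_cases hx : x = j
  · rw [if_pos hx, hx, hbj]
  · rw [if_neg hx]
    exact hone x hx

lemma hpol_eq (hn : 2 ≤ n) (j : Fin n) :
    hpol n j = coeff (A n j) (hpol n j) • monomial (A n j) 1 := by
  apply MvPolynomial.ext
  intro m
  rw [MvPolynomial.coeff_smul, MvPolynomial.coeff_monomial]
  by_cases hm : m = A n j
  · rw [hm, if_pos rfl, smul_eq_mul, mul_one]
  · rw [if_neg (fun h => hm h.symm), smul_zero]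
    by_contra hc
    exact hm (hpol_coeff_eq_zero n hn j hc)

end AD

namespace AD

variable (n : ℕ)

/-! ### Swap symmetry -/

/-- Reordering of a pair after applying `τ`. -/
def swSort (τ : Equiv.Perm (Fin n)) (x : Σ _ : Fin n, Fin n) : Σ _ : Fin n, Fin n :=
  if τ x.1 < τ x.2 then ⟨τ x.1, τ x.2⟩ else ⟨τ x.2, τ x.1⟩

/-- Sign of the reordering. -/
def swSgn (τ : Equiv.Perm (Fin n)) (x : Σ _ : Fin n, Fin n) : ℝ :=
  if τ x.1 < τ x.2 then 1 else -1

/-- The index set of pairs `i < k`. -/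
def Sig : Finset (Σ _ : Fin n, Fin n) := Finset.univ.sigma (fun i => Finset.Ioi i)

/-- The factors of `Δ`. -/
def Fq (x : Σ _ : Fin n, Fin n) : S n := (X x.1 : S n) ^ 2 - X x.2 ^ 2

lemma mem_Sig {x : Σ _ : Fin n, Fin n} (hx : x ∈ Sig n) : x.1 < x.2 := by
  rw [Sig, Finset.mem_sigma] at hx
  exact Finset.mem_Ioi.mp hx.2

lemma swSort_mem (τ : Equiv.Perm (Fin n)) {x : Σ _ : Fin n, Fin n} (hx : x ∈ Sig n) :
    swSort n τ x ∈ Sig n := by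
  have hlt : (swSort n τ x).1 < (swSort n τ x).2 := by
    rw [swSort]
    split
    · assumption
    · rename_i h
      have hne : τ x.2 ≠ τ x.1 := fun hc => (mem_Sig n hx).ne (τ.injective hc).symm
      exact lt_of_le_of_ne (not_lt.mp h) hne
  rw [Sig, Finset.mem_sigma]
  exact ⟨Finset.mem_univ _, Finset.mem_Ioi.mpr hlt⟩

lemma swSort_invol (τ : Equiv.Perm (Fin n)) (hτ : ∀ y, τ (τ y) = y)
    {x : Σ _ : Fin n, Fin n} (hx : x ∈ Sig n) : swSort n τ (swSort n τ x) = x := by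
  have hlt := mem_Sig n hx
  by_cases h : τ x.1 < τ x.2
  · simp only [swSort, if_pos h, hτ]
    rw [if_pos hlt]
  · simp only [swSort, if_neg h, hτ]
    rw [if_neg (not_lt.mpr hlt.le)]

lemma rename_Dpoly (τ : Equiv.Perm (Fin n)) (hτ : ∀ y, τ (τ y) = y) :
    ∃ e : ℝ, e * e = 1 ∧ rename (⇑τ) (Dpoly n) = e • Dpoly n := by
  have hDp : Dpoly n = ∏ x ∈ Sig n, Fq n x := by
    rw [Sig, Finset.prod_sigma]
    rfl
  refine ⟨∏ x ∈ Sig n, swSgn n τ x, ?_, ?_⟩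
  · rw [← Finset.prod_mul_distrib]
    apply Finset.prod_eq_one
    intro x _
    rw [swSgn]
    split <;> norm_num
  · rw [hDp, map_prod]
    have hfac : ∀ x ∈ Sig n, rename (⇑τ) (Fq n x) = C (swSgn n τ x) * Fq n (swSort n τ x) := by
      intro x _
      rw [Fq, map_sub, map_pow, map_pow, rename_X, rename_X, swSgn, swSort]
      by_cases h : τ x.1 < τ x.2
      · rw [if_pos h, if_pos h, map_one, one_mul, Fq]
      · rw [if_neg h, if_neg h, Fq]
        have hC : (C (-1 : ℝ) : S n) = -1 := by simp
        rw [hC]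
        ring
    rw [Finset.prod_congr rfl hfac, Finset.prod_mul_distrib]
    have hswap : ∏ x ∈ Sig n, Fq n (swSort n τ x) = ∏ x ∈ Sig n, Fq n x :=
      Finset.prod_nbij' (swSort n τ) (swSort n τ)
        (fun x hx => swSort_mem n τ hx) (fun x hx => swSort_mem n τ hx)
        (fun x hx => swSort_invol n τ hτ hx) (fun x hx => swSort_invol n τ hτ hx)
        (fun x _ => rfl)
    rw [hswap, MvPolynomial.smul_eq_C_mul, map_prod (C : ℝ →+* S n)]

lemma mapDomain_A (τ : Equiv.Perm (Fin n)) (j : Fin n) :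
    Finsupp.mapDomain (⇑τ) (A n j) = A n (τ j) := by
  ext x
  rw [mapDomain_apply', A_apply, A_apply]
  simp only [Equiv.symm_apply_eq]

lemma coeff_swap (hn : 2 ≤ n) (j j' : Fin n) :
    coeff (A n j) (hpol n j) = coeff (A n j') (hpol n j') := by
  set τ := Equiv.swap j j' with hτdef
  have hτ : ∀ y, τ (τ y) = y := fun y => Equiv.swap_apply_self j j' y
  obtain ⟨e, he, hD⟩ := rename_Dpoly n τ hτ
  have hM : rename (⇑τ) (monomial (A n j) (1 : ℝ)) = monomial (A n (τ j)) 1 := by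
    rw [rename_monomial, mapDomain_A]
  have h1 : rename (⇑τ) (hpol n j) = hpol n (τ j) := by
    rw [hpol, rename_apDiff, rename_apDiff, hM, hD]
    simp only [apDiff_smul_left, apDiff_smul_right]
    rw [smul_smul, he, one_smul, hpol]
  have h2 : rename (⇑τ) (hpol n j) = coeff (A n j) (hpol n j) • monomial (A n (τ j)) 1 := by
    conv_lhs => rw [hpol_eq n hn j]
    rw [map_smul, hM]
  have h3 : coeff (A n (τ j)) (hpol n (τ j)) = coeff (A n j) (hpol n j) := by
    rw [← h1, h2, MvPolynomial.coeff_smul, MvPolynomial.coeff_monomial, if_pos rfl,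
      smul_eq_mul, mul_one]
  rw [← h3, hτdef, Equiv.swap_apply_left]

end AD

theorem stmt19 (ℓ : ℕ) (hl : 2 ≤ ℓ) :
    ∃ lam : ℝ, ∀ j : Fin (2 * ℓ),
      apDiff (apDiff (MvPolynomial.pderiv j (∏ i, (MvPolynomial.X i : S (2 * ℓ))))
          (∏ i : Fin (2 * ℓ), ∏ k ∈ Finset.Ioi i,
            ((MvPolynomial.X i : S (2 * ℓ)) ^ 2 - MvPolynomial.X k ^ 2)))
        (∏ i : Fin (2 * ℓ), ∏ k ∈ Finset.Ioi i,
            ((MvPolynomial.X i : S (2 * ℓ)) ^ 2 - MvPolynomial.X k ^ 2))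
      = lam • MvPolynomial.pderiv j (∏ i, (MvPolynomial.X i : S (2 * ℓ))) := by
  have hn : 2 ≤ 2 * ℓ := by omega
  have h0 : (0 : ℕ) < 2 * ℓ := by omega
  refine ⟨coeff (AD.A (2 * ℓ) ⟨0, h0⟩) (AD.hpol (2 * ℓ) ⟨0, h0⟩), ?_⟩
  intro j
  rw [AD.pderiv_prod_X (2 * ℓ) j]
  show AD.hpol (2 * ℓ) j = _ • (monomial (AD.A (2 * ℓ) j)) 1
  rw [AD.hpol_eq (2 * ℓ) hn j, AD.coeff_swap (2 * ℓ) hn j ⟨0, h0⟩]
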